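/- Let A and B be nonzero 2×2 complex matrices satisfying A·Bᴴ = 0 and Bᴴ·A = 0, where ᴴ denotes the conjugate transpose. Then there exist a unitary 2×2 matrix V, an orthonormal pair of vectors u, v ∈ ℂ² (i.e., ⟨u,u⟩ = ⟨v,v⟩ = 1 and ⟨u,v⟩ = 0), and real numbers α > 0, β > 0, such that A = α · V · (u uᴴ) and B = β · V · (v vᴴ), where u uᴴ denotes the rank-one matrix (outer product) with entries u_i · conj(u_j). -/

import Mathlib

open Matrix

private lemma pair_key (p q : Fin 2 → ℂ)
    (hp : (starRingEnd ℂ) (p 0) * p 0 + (starRingEnd ℂ) (p 1) * p 1 = 1)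
    (hq : (starRingEnd ℂ) (q 0) * q 0 + (starRingEnd ℂ) (q 1) * q 1 = 1)
    (hpq : (starRingEnd ℂ) (p 0) * q 0 + (starRingEnd ℂ) (p 1) * q 1 = 0)
    (i j : Fin 2) :
    p i * (starRingEnd ℂ) (p j) + q i * (starRingEnd ℂ) (q j)
      = if i = j then 1 else 0 := by
  have hpq' : p 0 * (starRingEnd ℂ) (q 0) + p 1 * (starRingEnd ℂ) (q 1) = 0 := by
    have := congrArg (starRingEnd ℂ) hpq
    simpa using this
  have g00 : p 0 * (starRingEnd ℂ) (p 0) + q 0 * (starRingEnd ℂ) (q 0) = 1 := by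
    linear_combination (1 - (starRingEnd ℂ) (q 0) * q 0) * hp
      + (starRingEnd ℂ) (p 1) * p 1 * hq
      + (starRingEnd ℂ) (q 0) * p 0 * hpq - (starRingEnd ℂ) (p 1) * q 1 * hpq'
  have g11 : p 1 * (starRingEnd ℂ) (p 1) + q 1 * (starRingEnd ℂ) (q 1) = 1 := by
    linear_combination (1 - (starRingEnd ℂ) (q 1) * q 1) * hp
      + (starRingEnd ℂ) (p 0) * p 0 * hq
      + (starRingEnd ℂ) (q 1) * p 1 * hpq - (starRingEnd ℂ) (p 0) * q 0 * hpq'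
  have g01 : p 0 * (starRingEnd ℂ) (p 1) + q 0 * (starRingEnd ℂ) (q 1) = 0 := by
    by_cases hz : p 1 = 0
    · have hP0 : (starRingEnd ℂ) (p 0) ≠ 0 := by
        intro h0
        rw [hz] at hp
        simp [h0] at hp
      apply mul_left_cancel₀ hP0
      rw [mul_zero]
      linear_combination (starRingEnd ℂ) (q 1) * hpq + (starRingEnd ℂ) (p 1) * g00
        - (starRingEnd ℂ) (p 1) * hq
    · apply mul_left_cancel₀ hz
      rw [mul_zero]
      linear_combination p 0 * hp + q 0 * hpq' - p 0 * g00
  have g10 : p 1 * (starRingEnd ℂ) (p 0) + q 1 * (starRingEnd ℂ) (q 0) = 0 := by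
    by_cases hz : p 0 = 0
    · have hP1 : (starRingEnd ℂ) (p 1) ≠ 0 := by
        intro h0
        rw [hz] at hp
        simp [h0] at hp
      apply mul_left_cancel₀ hP1
      rw [mul_zero]
      linear_combination (starRingEnd ℂ) (p 0) * hp + (starRingEnd ℂ) (q 0) * hpq
        - (starRingEnd ℂ) (p 0) * g00
    · apply mul_left_cancel₀ hz
      rw [mul_zero]
      linear_combination q 1 * hpq' + p 1 * g00 - p 1 * hq
  fin_cases i <;> fin_cases j <;> simpa using (by assumption : _)

private lemma unit_vec (a b : ℂ) (h : ¬(a = 0 ∧ b = 0)) :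
    (starRingEnd ℂ) (a / (Real.sqrt (Complex.normSq a + Complex.normSq b) : ℝ))
        * (a / (Real.sqrt (Complex.normSq a + Complex.normSq b) : ℝ))
      + (starRingEnd ℂ) (b / (Real.sqrt (Complex.normSq a + Complex.normSq b) : ℝ))
        * (b / (Real.sqrt (Complex.normSq a + Complex.normSq b) : ℝ)) = 1 := by
  set n : ℝ := Real.sqrt (Complex.normSq a + Complex.normSq b) with hn
  have hpos : 0 < Complex.normSq a + Complex.normSq b := by
    rcases not_and_or.mp h with h' | h'
    · have := Complex.normSq_pos.mpr h'
      have := Complex.normSq_nonneg b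
      linarith
    · have := Complex.normSq_pos.mpr h'
      have := Complex.normSq_nonneg a
      linarith
  have hnpos : 0 < n := Real.sqrt_pos.mpr hpos
  have hn2 : (n : ℝ) ^ 2 = Complex.normSq a + Complex.normSq b := Real.sq_sqrt hpos.le
  have hne : (n : ℂ) ≠ 0 := by
    simpa using hnpos.ne'
  have ha : (starRingEnd ℂ) a * a = (Complex.normSq a : ℂ) := by
    rw [mul_comm]; exact Complex.mul_conj a
  have hb : (starRingEnd ℂ) b * b = (Complex.normSq b : ℂ) := by
    rw [mul_comm]; exact Complex.mul_conj b
  have hcn : (starRingEnd ℂ) (n : ℂ) = (n : ℂ) := Complex.conj_ofReal n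
  rw [map_div₀, map_div₀, hcn]
  field_simp
  rw [ha, hb]
  have : ((n : ℂ))^2 = ((Complex.normSq a + Complex.normSq b : ℝ) : ℂ) := by
    push_cast [← hn2]; ring
  rw [← Complex.ofReal_add, ← this]

theorem rank_one_form_of_unitarity_conditions
    (A B : Matrix (Fin 2) (Fin 2) ℂ) (hA : A ≠ 0) (hB : B ≠ 0)
    (h1 : A * Bᴴ = 0) (h2 : Bᴴ * A = 0) :
    ∃ (V : Matrix (Fin 2) (Fin 2) ℂ) (u v : Fin 2 → ℂ) (α β : ℝ),
      V * Vᴴ = 1 ∧ Vᴴ * V = 1 ∧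
      (∑ i, (starRingEnd ℂ) (u i) * u i) = 1 ∧
      (∑ i, (starRingEnd ℂ) (v i) * v i) = 1 ∧
      (∑ i, (starRingEnd ℂ) (u i) * v i) = 0 ∧
      0 < α ∧ 0 < β ∧
      A = (α : ℂ) • (V * vecMulVec u (star u)) ∧
      B = (β : ℂ) • (V * vecMulVec v (star v)) := by
  classical
  -- a nonzero entry of B
  obtain ⟨j0, k0, hBjk⟩ : ∃ j k, B j k ≠ 0 := by
    by_contra h
    push_neg at h
    exact hB (by ext i j; simpa using h i j)
  set s : Fin 2 → ℂ := B j0 with hs_def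
  have hs01 : ¬(s 0 = 0 ∧ s 1 = 0) := by
    rintro ⟨h0, h1'⟩
    fin_cases k0 <;> simp_all
  -- rows of A are orthogonal to s
  have horthA : ∀ i, A i 0 * (starRingEnd ℂ) (s 0) + A i 1 * (starRingEnd ℂ) (s 1) = 0 := by
    intro i
    have := congrFun (congrFun h1 i) j0
    simpa [Matrix.mul_apply, Fin.sum_univ_two, Matrix.conjTranspose_apply] using this
  set t : Fin 2 → ℂ := ![(starRingEnd ℂ) (s 1), -((starRingEnd ℂ) (s 0))] with ht_def
  have ht01 : ¬(t 0 = 0 ∧ t 1 = 0) := by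
    rintro ⟨h0, h1'⟩
    simp [ht_def] at h0 h1'
    exact hs01 ⟨h1', h0⟩
  set c : Fin 2 → ℂ := fun i =>
    if s 0 = 0 then A i 0 / (starRingEnd ℂ) (s 1) else A i 1 / (-((starRingEnd ℂ) (s 0))) with hc_def
  have hAct : ∀ i k, A i k = c i * t k := by
    intro i k
    have e := horthA i
    by_cases h0 : s 0 = 0
    · have h1' : s 1 ≠ 0 := fun h => hs01 ⟨h0, h⟩
      have hc1 : (starRingEnd ℂ) (s 1) ≠ 0 := by simpa using h1'
      have hA1 : A i 1 = 0 := by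
        rw [h0] at e
        simp at e
        rcases e with e | e
        · exact e
        · exact absurd e h1'
      fin_cases k
      · show A i 0 = c i * t 0
        simp only [hc_def, ht_def, if_pos h0, Matrix.cons_val_zero]
        rw [div_mul_cancel₀ _ hc1]
      · show A i 1 = c i * t 1
        simp only [hc_def, ht_def, if_pos h0, h0, Matrix.cons_val_one, Matrix.head_cons]
        simp [hA1]
    · have hc0 : (starRingEnd ℂ) (s 0) ≠ 0 := by simpa using h0
      fin_cases k
      · show A i 0 = c i * t 0
        simp only [hc_def, ht_def, if_neg h0, Matrix.cons_val_zero]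
        rw [div_mul_eq_mul_div, eq_div_iff (neg_ne_zero.mpr hc0)]
        linear_combination -e
      · show A i 1 = c i * t 1
        simp only [hc_def, ht_def, if_neg h0, Matrix.cons_val_one, Matrix.head_cons,
          Matrix.cons_val_zero]
        rw [div_mul_cancel₀ _ (neg_ne_zero.mpr hc0)]
  have hc01 : ¬(c 0 = 0 ∧ c 1 = 0) := by
    rintro ⟨h0, h1'⟩
    apply hA
    ext i k
    rw [hAct i k]
    fin_cases i <;> simp [h0, h1']
  obtain ⟨i0, hci0⟩ : ∃ i, c i ≠ 0 := by
    by_contra h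
    push_neg at h
    exact hc01 ⟨h 0, h 1⟩
  -- rows of B are multiples of s
  have horthB : ∀ j, s 1 * B j 0 - s 0 * B j 1 = 0 := by
    intro j
    have e := congrFun (congrFun h1 i0) j
    simp only [Matrix.mul_apply, Fin.sum_univ_two, Matrix.conjTranspose_apply, Complex.star_def,
      Matrix.zero_apply] at e
    rw [hAct i0 0, hAct i0 1] at e
    have e' : c i0 * (t 0 * (starRingEnd ℂ) (B j 0) + t 1 * (starRingEnd ℂ) (B j 1)) = 0 := by
      linear_combination e
    have e'' : t 0 * (starRingEnd ℂ) (B j 0) + t 1 * (starRingEnd ℂ) (B j 1) = 0 :=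
      (mul_eq_zero.mp e').resolve_left hci0
    have := congrArg (starRingEnd ℂ) e''
    simp only [_root_.map_add, _root_.map_mul, _root_.map_zero, ht_def] at this
    simp only [Matrix.cons_val_zero, Matrix.cons_val_one, Matrix.head_cons, map_neg,
      Complex.conj_conj] at this
    linear_combination this
  set d : Fin 2 → ℂ := fun j => if s 0 = 0 then B j 1 / s 1 else B j 0 / s 0 with hd_def
  have hBds : ∀ j k, B j k = d j * s k := by
    intro j k
    have e := horthB j
    by_cases h0 : s 0 = 0
    · have h1' : s 1 ≠ 0 := fun h => hs01 ⟨h0, h⟩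
      have hB0 : B j 0 = 0 := by
        rw [h0] at e
        simp at e
        rcases e with e | e
        · exact absurd e h1'
        · exact e
      fin_cases k
      · show B j 0 = d j * s 0
        simp only [hd_def, if_pos h0, h0]
        simp [hB0]
      · show B j 1 = d j * s 1
        simp only [hd_def, if_pos h0]
        rw [div_mul_cancel₀ _ h1']
    · fin_cases k
      · show B j 0 = d j * s 0
        simp only [hd_def, if_neg h0]
        rw [div_mul_cancel₀ _ h0]
      · show B j 1 = d j * s 1
        simp only [hd_def, if_neg h0]
        rw [div_mul_eq_mul_div, eq_div_iff h0]
        linear_combination -e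
  have hd01 : ¬(d 0 = 0 ∧ d 1 = 0) := by
    rintro ⟨h0, h1'⟩
    apply hB
    ext j k
    rw [hBds j k]
    fin_cases j <;> simp [h0, h1']
  -- inner product of d and c vanishes
  have hcd : (starRingEnd ℂ) (d 0) * c 0 + (starRingEnd ℂ) (d 1) * c 1 = 0 := by
    have hsk0 : s k0 ≠ 0 := hBjk
    set jj : Fin 2 := if s 0 = 0 then 0 else 1 with hjj
    have htjj : t jj ≠ 0 := by
      by_cases h0 : s 0 = 0
      · have h1' : s 1 ≠ 0 := fun h => hs01 ⟨h0, h⟩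
        simp [hjj, if_pos h0, ht_def, h1']
      · simp [hjj, if_neg h0, ht_def, h0]
    have e := congrFun (congrFun h2 k0) jj
    simp only [Matrix.mul_apply, Fin.sum_univ_two, Matrix.conjTranspose_apply, Complex.star_def,
      Matrix.zero_apply] at e
    rw [hBds 0 k0, hBds 1 k0, hAct 0 jj, hAct 1 jj] at e
    have e' : (starRingEnd ℂ) (s k0) * t jj *
        ((starRingEnd ℂ) (d 0) * c 0 + (starRingEnd ℂ) (d 1) * c 1) = 0 := by
      simp only [_root_.map_mul] at e
      linear_combination e
    have hcs : (starRingEnd ℂ) (s k0) ≠ 0 := by simpa using hsk0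
    rcases mul_eq_zero.mp e' with h | h
    · rcases mul_eq_zero.mp h with h | h
      · exact absurd h hcs
      · exact absurd h htjj
    · exact h
  -- normalizations
  set nt : ℝ := Real.sqrt (Complex.normSq (t 0) + Complex.normSq (t 1)) with hnt
  set ns : ℝ := Real.sqrt (Complex.normSq (s 0) + Complex.normSq (s 1)) with hns
  set nc : ℝ := Real.sqrt (Complex.normSq (c 0) + Complex.normSq (c 1)) with hnc
  set nd : ℝ := Real.sqrt (Complex.normSq (d 0) + Complex.normSq (d 1)) with hnd
  have sqrt_pos' : ∀ (a b : ℂ), ¬(a = 0 ∧ b = 0) →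
      0 < Real.sqrt (Complex.normSq a + Complex.normSq b) := by
    intro a b h
    apply Real.sqrt_pos.mpr
    rcases not_and_or.mp h with h' | h'
    · have := Complex.normSq_pos.mpr h'
      have := Complex.normSq_nonneg b
      linarith
    · have := Complex.normSq_pos.mpr h'
      have := Complex.normSq_nonneg a
      linarith
  have hntpos : 0 < nt := sqrt_pos' _ _ ht01
  have hnspos : 0 < ns := sqrt_pos' _ _ hs01
  have hncpos : 0 < nc := sqrt_pos' _ _ hc01
  have hndpos : 0 < nd := sqrt_pos' _ _ hd01
  have hntne : (nt : ℂ) ≠ 0 := by simpa using hntpos.ne'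
  have hnsne : (ns : ℂ) ≠ 0 := by simpa using hnspos.ne'
  have hncne : (nc : ℂ) ≠ 0 := by simpa using hncpos.ne'
  have hndne : (nd : ℂ) ≠ 0 := by simpa using hndpos.ne'
  set u : Fin 2 → ℂ := fun k => (starRingEnd ℂ) (t k) / nt with hu_def
  set v : Fin 2 → ℂ := fun k => (starRingEnd ℂ) (s k) / ns with hv_def
  set p : Fin 2 → ℂ := fun i => c i / nc with hp_def
  set q : Fin 2 → ℂ := fun i => d i / nd with hq_def
  have hcu : ∀ k, (starRingEnd ℂ) (u k) = t k / nt := by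
    intro k
    simp [hu_def, map_div₀, Complex.conj_conj, Complex.conj_ofReal]
  have hcv : ∀ k, (starRingEnd ℂ) (v k) = s k / ns := by
    intro k
    simp [hv_def, map_div₀, Complex.conj_conj, Complex.conj_ofReal]
  -- unit norms
  have hnormSq_conj : ∀ z : ℂ, Complex.normSq ((starRingEnd ℂ) z) = Complex.normSq z :=
    fun z => Complex.normSq_conj z
  have huu : (starRingEnd ℂ) (u 0) * u 0 + (starRingEnd ℂ) (u 1) * u 1 = 1 := by
    have := unit_vec ((starRingEnd ℂ) (t 0)) ((starRingEnd ℂ) (t 1))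
      (by rintro ⟨h0, h1'⟩; exact ht01 ⟨by simpa using h0, by simpa using h1'⟩)
    simpa [hu_def, hnt, hnormSq_conj] using this
  have hvv : (starRingEnd ℂ) (v 0) * v 0 + (starRingEnd ℂ) (v 1) * v 1 = 1 := by
    have := unit_vec ((starRingEnd ℂ) (s 0)) ((starRingEnd ℂ) (s 1))
      (by rintro ⟨h0, h1'⟩; exact hs01 ⟨by simpa using h0, by simpa using h1'⟩)
    simpa [hv_def, hns, hnormSq_conj] using this
  have hpp : (starRingEnd ℂ) (p 0) * p 0 + (starRingEnd ℂ) (p 1) * p 1 = 1 := by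
    have := unit_vec (c 0) (c 1) hc01
    simpa [hp_def, hnc] using this
  have hqq : (starRingEnd ℂ) (q 0) * q 0 + (starRingEnd ℂ) (q 1) * q 1 = 1 := by
    have := unit_vec (d 0) (d 1) hd01
    simpa [hq_def, hnd] using this
  -- orthogonality
  have hts : t 0 * (starRingEnd ℂ) (s 0) + t 1 * (starRingEnd ℂ) (s 1) = 0 := by
    simp [ht_def]
    ring
  have huv : (starRingEnd ℂ) (u 0) * v 0 + (starRingEnd ℂ) (u 1) * v 1 = 0 := by
    rw [hcu 0, hcu 1]
    simp only [hv_def]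
    field_simp
    linear_combination hts
  have hpq : (starRingEnd ℂ) (p 0) * q 0 + (starRingEnd ℂ) (p 1) * q 1 = 0 := by
    simp only [hp_def, hq_def, map_div₀, Complex.conj_ofReal]
    field_simp
    have := congrArg (starRingEnd ℂ) hcd
    simp only [_root_.map_add, _root_.map_mul, _root_.map_zero, Complex.conj_conj] at this
    linear_combination this
  have hvu : (starRingEnd ℂ) (v 0) * u 0 + (starRingEnd ℂ) (v 1) * u 1 = 0 := by
    have := congrArg (starRingEnd ℂ) huv
    simp only [_root_.map_add, _root_.map_mul, _root_.map_zero, Complex.conj_conj] at this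
    linear_combination this
  have hqp : (starRingEnd ℂ) (q 0) * p 0 + (starRingEnd ℂ) (q 1) * p 1 = 0 := by
    have := congrArg (starRingEnd ℂ) hpq
    simp only [_root_.map_add, _root_.map_mul, _root_.map_zero, Complex.conj_conj] at this
    linear_combination this
  -- the unitary
  set V : Matrix (Fin 2) (Fin 2) ℂ :=
    Matrix.of (fun i j => p i * (starRingEnd ℂ) (u j) + q i * (starRingEnd ℂ) (v j)) with hV_def
  have hVapp : ∀ i j, V i j = p i * (starRingEnd ℂ) (u j) + q i * (starRingEnd ℂ) (v j) := by
    intro i j; rfl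
  have hVVh : V * Vᴴ = 1 := by
    ext i j
    simp only [Matrix.mul_apply, Fin.sum_univ_two, Matrix.conjTranspose_apply, hVapp,
      Matrix.one_apply]
    simp only [Complex.star_def, _root_.map_add, _root_.map_mul, Complex.conj_conj]
    have key := pair_key p q hpp hqq hpq i j
    linear_combination (p i * (starRingEnd ℂ) (p j)) * huu
      + (p i * (starRingEnd ℂ) (q j)) * huv
      + (q i * (starRingEnd ℂ) (p j)) * hvu
      + (q i * (starRingEnd ℂ) (q j)) * hvv + key
  have hVhV : Vᴴ * V = 1 := by
    ext i j
    simp only [Matrix.mul_apply, Fin.sum_univ_two, Matrix.conjTranspose_apply, hVapp,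
      Matrix.one_apply]
    simp only [Complex.star_def, _root_.map_add, _root_.map_mul, Complex.conj_conj]
    have key := pair_key u v huu hvv huv i j
    linear_combination (u i * (starRingEnd ℂ) (u j)) * hpp
      + (u i * (starRingEnd ℂ) (v j)) * hpq
      + (v i * (starRingEnd ℂ) (u j)) * hqp
      + (v i * (starRingEnd ℂ) (v j)) * hqq + key
  refine ⟨V, u, v, nc * nt, nd * ns, hVVh, hVhV, ?_, ?_, ?_,
    mul_pos hncpos hntpos, mul_pos hndpos hnspos, ?_, ?_⟩
  · rw [Fin.sum_univ_two]; exact huu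
  · rw [Fin.sum_univ_two]; exact hvv
  · rw [Fin.sum_univ_two]; exact huv
  · -- A = α • (V * u uᴴ)
    have hVu : ∀ i, V i 0 * u 0 + V i 1 * u 1 = p i := by
      intro i
      rw [hVapp, hVapp]
      linear_combination p i * huu + q i * hvu
    ext i j
    simp only [Matrix.smul_apply, Matrix.mul_apply, Fin.sum_univ_two, Matrix.vecMulVec_apply,
      Pi.star_apply, Complex.star_def, smul_eq_mul]
    have : V i 0 * (u 0 * (starRingEnd ℂ) (u j)) + V i 1 * (u 1 * (starRingEnd ℂ) (u j))
        = p i * (starRingEnd ℂ) (u j) := by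
      have := hVu i
      linear_combination (starRingEnd ℂ) (u j) * this
    rw [hAct i j]
    push_cast
    rw [this, hcu j]
    simp only [hp_def]
    field_simp
  · -- B = β • (V * v vᴴ)
    have hVv : ∀ i, V i 0 * v 0 + V i 1 * v 1 = q i := by
      intro i
      rw [hVapp, hVapp]
      linear_combination p i * huv + q i * hvv
    ext i j
    simp only [Matrix.smul_apply, Matrix.mul_apply, Fin.sum_univ_two, Matrix.vecMulVec_apply,
      Pi.star_apply, Complex.star_def, smul_eq_mul]
    have : V i 0 * (v 0 * (starRingEnd ℂ) (v j)) + V i 1 * (v 1 * (starRingEnd ℂ) (v j))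
        = q i * (starRingEnd ℂ) (v j) := by
      have := hVv i
      linear_combination (starRingEnd ℂ) (v j) * this
    rw [hBds i j]
    push_cast
    rw [this, hcv j]
    simp only [hq_def]
    field_simp
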